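/- The Ricci curvature of the connection D^{α,γ} satisfies Ric^D = Ric − [(n−1)α + γ] ∇²u + [(n−1)α² − γ²] du⊗du + (γ Δu + γ[(n−1)α + γ] |∇u|²) g, where Ric, ∇²u, Δu are taken with respect to the Levi-Civita connection of g. -/

import Mathlib

open scoped Manifold
open Finset Function MeasureTheory

variable {EE : Type*} [NormedAddCommGroup EE] [NormedSpace ℝ EE]
  {HM : Type*} [TopologicalSpace HM] {I : ModelWithCorners ℝ EE HM}
  {M : Type*} [TopologicalSpace M] [ChartedSpace HM M] [IsManifold I ((⊤ : ℕ∞) : WithTop ℕ∞) M]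

local notation "𝒞" => C^(⊤ : ℕ∞)⟮I, M; ℝ⟯
local notation "VF" => Derivation ℝ C^(⊤ : ℕ∞)⟮I, M; ℝ⟯ C^(⊤ : ℕ∞)⟮I, M; ℝ⟯

/-- `D` is an affine connection on vector fields: additive and `𝒞`-linear in the
first slot, additive, `ℝ`-linear and Leibniz in the second slot. -/
def IsAffineConnection (D : VF → VF → VF) : Prop :=
  (∀ X Y Z, D (X + Y) Z = D X Z + D Y Z) ∧
  (∀ (f : 𝒞) X Y, D (f • X) Y = f • D X Y) ∧
  (∀ X Y Z, D X (Y + Z) = D X Y + D X Z) ∧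
  (∀ (c : ℝ) X Y, D X (c • Y) = c • D X Y) ∧
  (∀ (f : 𝒞) X Y, D X (f • Y) = X f • Y + f • D X Y)

/-- `g` is a (symmetric, `𝒞`-bilinear) Riemannian metric pairing on vector fields. -/
def IsMetric (g : VF → VF → 𝒞) : Prop :=
  (∀ X Y, g X Y = g Y X) ∧
  (∀ X Y Z, g (X + Y) Z = g X Z + g Y Z) ∧
  (∀ (f : 𝒞) X Y, g (f • X) Y = f * g X Y)

/-- `e` is a global orthonormal frame for `g`. -/
def IsONFrame {n : ℕ} (g : VF → VF → 𝒞) (e : Fin n → VF) : Prop :=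
  (∀ i j, g (e i) (e j) = if i = j then 1 else 0) ∧
  (∀ X : VF, X = ∑ i, g X (e i) • e i)

/-- `D` is torsion-free. -/
def IsTorsionFree (D : VF → VF → VF) : Prop := ∀ X Y, D X Y - D Y X = ⁅X, Y⁆

/-- `D` is compatible with the metric `g`. -/
def IsCompatible (g : VF → VF → 𝒞) (D : VF → VF → VF) : Prop :=
  ∀ X Y Z, X (g Y Z) = g (D X Y) Z + g Y (D X Z)

/-- Curvature operator `R^D(X,Y)Z = D_X D_Y Z - D_Y D_X Z - D_{[X,Y]} Z`. -/
noncomputable def Rcurv (D : VF → VF → VF) (X Y Z : VF) : VF := D X (D Y Z) - D Y (D X Z) - D ⁅X, Y⁆ Z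

/-- Ricci tensor of `D`: the trace of `Z ↦ R^D(Z,X)Y`, computed via the orthonormal frame. -/
noncomputable def RicciT {n : ℕ} (g : VF → VF → 𝒞) (e : Fin n → VF) (D : VF → VF → VF) (X Y : VF) : 𝒞 :=
  ∑ i, g (Rcurv D (e i) X Y) (e i)

/-- Hessian of a function with respect to a connection. -/
noncomputable def HessT (D : VF → VF → VF) (u : 𝒞) (X Y : VF) : 𝒞 := X (Y u) - (D X Y) u

/-- Laplacian of a function with respect to a connection (frame trace of the Hessian). -/
noncomputable def LapT {n : ℕ} (D : VF → VF → VF) (e : Fin n → VF) (u : 𝒞) : 𝒞 :=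
  ∑ i, HessT D u (e i) (e i)

/-- Divergence of a vector field with respect to a connection (frame trace of `DY`). -/
noncomputable def divT {n : ℕ} (g : VF → VF → 𝒞) (e : Fin n → VF) (D : VF → VF → VF) (Y : VF) : 𝒞 :=
  ∑ i, g (D (e i) Y) (e i)

/-- Second covariant derivative `D²X(V,W) = D_W (D_V X) - D_{D_W V} X`. -/
noncomputable def D2T (D : VF → VF → VF) (X V W : VF) : VF := D W (D V X) - D (D W V) X

set_option maxHeartbeats 4000000 in
/-- formula for the Ricci curvature of `D^{α,γ}` (Proposition 2.3). -/
theorem ricci_of_affine_connection {n : ℕ}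
    (g : VF → VF → 𝒞) (hg : IsMetric g)
    (e : Fin n → VF) (he : IsONFrame g e)
    (LC : VF → VF → VF) (hLC : IsAffineConnection LC) (hLCtf : IsTorsionFree LC)
    (hLCcompat : IsCompatible g LC)
    (u : 𝒞) (gradu : VF) (hgradu : ∀ X : VF, g gradu X = X u)
    (α γ : ℝ) (D : VF → VF → VF)
    (hD : ∀ X Y, D X Y = LC X Y + (α • X u) • Y + (α • Y u) • X + (γ • g X Y) • gradu) :
    ∀ X Y : VF,
      RicciT g e D X Y
        = RicciT g e LC X Y
          - (((n : ℝ) - 1) * α + γ) • HessT LC u X Y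
          + ((((n : ℝ) - 1) * α ^ 2 - γ ^ 2) • (X u * Y u))
          + (γ • LapT LC e u
              + (γ * (((n : ℝ) - 1) * α + γ)) • g gradu gradu) * g X Y := by
  obtain ⟨hgs, hga, hgm⟩ := hg
  obtain ⟨heON, heexp⟩ := he
  obtain ⟨hadd1, hsmul1, hadd2, hRsmul2, hLeib⟩ := hLC
  intro X Y
  -- derived bilinearity lemmas for `g`
  have hga2 : ∀ P Q R : VF, g P (Q + R) = g P Q + g P R := fun P Q R => by
    rw [hgs, hga, hgs Q, hgs R]
  have hgm2 : ∀ (f : 𝒞) (P Q : VF), g P (f • Q) = f * g P Q := fun f P Q => by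
    rw [hgs, hgm, hgs]
  have hgsub1 : ∀ P Q R : VF, g (P - Q) R = g P R - g Q R := fun P Q R => by
    have h := hga (P - Q) Q R
    rw [sub_add_cancel] at h
    exact eq_sub_of_add_eq h.symm
  have hgsub2 : ∀ P Q R : VF, g P (Q - R) = g P Q - g P R := fun P Q R => by
    rw [hgs, hgsub1, hgs Q, hgs R]
  have hsub1 : ∀ P Q R : VF, LC (P - Q) R = LC P R - LC Q R := fun P Q R => by
    have h := hadd1 (P - Q) Q R
    rw [sub_add_cancel] at h
    exact eq_sub_of_add_eq h.symm
  have hsub2 : ∀ P Q R : VF, LC P (Q - R) = LC P Q - LC P R := fun P Q R => by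
    have h := hadd2 P (Q - R) R
    rw [sub_add_cancel] at h
    exact eq_sub_of_add_eq h.symm
  have hgradu' : ∀ P : VF, g P gradu = P u := fun P => by rw [hgs]; exact hgradu P
  have htf : ∀ P Q : VF, ⁅P, Q⁆ = LC P Q - LC Q P := fun P Q => (hLCtf P Q).symm
  have hcompat : ∀ P Q R : VF, P (g Q R) = g (LC P Q) R + g Q (LC P R) :=
    fun P Q R => hLCcompat P Q R
  -- `g (LC Z gradu) W` is the Hessian
  have hessg : ∀ Z W : VF, g (LC Z gradu) W = Z (W u) - (LC Z W) u := fun Z W => by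
    have h := hLCcompat Z gradu W
    rw [hgradu W, hgradu (LC Z W)] at h
    exact eq_sub_of_add_eq h.symm
  have hessg2 : ∀ Z W : VF, g W (LC Z gradu) = Z (W u) - (LC Z W) u := fun Z W => by
    rw [hgs]; exact hessg Z W
  -- symmetry of the Hessian
  have hsymmH : ∀ P Q : VF, HessT LC u P Q = HessT LC u Q P := by
    intro P Q
    have h := congrArg (fun V : VF => V u) (hLCtf P Q)
    simp only [Derivation.sub_apply, Derivation.commutator_apply] at h
    simp only [HessT]
    linear_combination -h
  -- generic trace lemma
  have trace_lin : ∀ F : VF → 𝒞, (∀ P Q : VF, F (P + Q) = F P + F Q) →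
      (∀ (f : 𝒞) (P : VF), F (f • P) = f * F P) → ∀ W : VF,
      ∑ i, g W (e i) * F (e i) = F W := by
    intro F hFa hFs W
    have hmap := map_sum (AddMonoidHom.mk' F hFa) (fun i => g W (e i) • e i) Finset.univ
    calc ∑ i, g W (e i) * F (e i) = ∑ i, F (g W (e i) • e i) :=
          Finset.sum_congr rfl fun i _ => (hFs _ _).symm
      _ = F (∑ i, g W (e i) • e i) := hmap.symm
      _ = F W := by rw [← heexp W]
  -- Hessian is 𝒞-bilinear
  have Hadd1 : ∀ P Q R : VF, HessT LC u (P + Q) R = HessT LC u P R + HessT LC u Q R := by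
    intro P Q R
    simp only [HessT, hadd1, Derivation.add_apply]
    ring
  have Hsmul1 : ∀ (f : 𝒞) (P R : VF), HessT LC u (f • P) R = f * HessT LC u P R := by
    intro f P R
    simp only [HessT, hsmul1, Derivation.smul_apply, smul_eq_mul]
    ring
  have Hadd2 : ∀ P Q R : VF, HessT LC u R (P + Q) = HessT LC u R P + HessT LC u R Q := by
    intro P Q R
    simp only [HessT, hadd2, Derivation.add_apply, map_add]
    ring
  have Hsmul2 : ∀ (f : 𝒞) (P R : VF), HessT LC u R (f • P) = f * HessT LC u R P := by
    intro f P R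
    simp only [HessT, hLeib, Derivation.add_apply, Derivation.smul_apply, smul_eq_mul,
      Derivation.leibniz]
    ring
  -- trace identities
  have T5 : ∑ i, g (e i) (e i) = (n : 𝒞) := by
    have h1 : ∀ i : Fin n, g (e i) (e i) = (1 : 𝒞) := fun i => by rw [heON, if_pos rfl]
    rw [Finset.sum_congr rfl fun i _ => h1 i, Finset.sum_const, Finset.card_univ,
      Fintype.card_fin, nsmul_eq_mul, mul_one]
  have T7 : ∀ W : VF, ∑ i, (e i) u * g W (e i) = W u := by
    intro W
    have h := trace_lin (fun P => P u) (fun P Q => Derivation.add_apply u)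
      (fun f P => by simp only [Derivation.smul_apply, smul_eq_mul]) W
    rw [← h]
    exact Finset.sum_congr rfl fun i _ => mul_comm _ _
  have T8 : ∑ i, (e i) u * (e i) u = gradu u := by
    rw [← T7 gradu]
    exact Finset.sum_congr rfl fun i _ => by rw [hgradu (e i)]
  have T9 : ∑ i, g Y (e i) * g X (e i) = g X Y := by
    have h := trace_lin (fun P => g P X) (fun P Q => hga P Q X) (fun f P => hgm f P X) Y
    rw [show g Y X = g X Y from hgs Y X] at h
    rw [← h]
    exact Finset.sum_congr rfl fun i _ => by rw [hgs (e i) X]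
  have TA : ∑ i, HessT LC u (e i) X * g Y (e i) = HessT LC u Y X := by
    have h := trace_lin (fun V => HessT LC u V X) (fun P Q => Hadd1 P Q X)
      (fun f P => Hsmul1 f P X) Y
    rw [← h]
    exact Finset.sum_congr rfl fun i _ => mul_comm _ _
  have TB : ∑ i, HessT LC u (e i) Y * g X (e i) = HessT LC u X Y := by
    have h := trace_lin (fun V => HessT LC u V Y) (fun P Q => Hadd1 P Q Y)
      (fun f P => Hsmul1 f P Y) X
    rw [← h]
    exact Finset.sum_congr rfl fun i _ => mul_comm _ _
  have TC : ∑ i, HessT LC u X (e i) * g Y (e i) = HessT LC u X Y := by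
    have h := trace_lin (fun V => HessT LC u X V) (fun P Q => Hadd2 P Q X)
      (fun f P => Hsmul2 f P X) Y
    rw [← h]
    exact Finset.sum_congr rfl fun i _ => mul_comm _ _
  have TLap : ∑ i, HessT LC u (e i) (e i) = LapT LC e u := rfl
  -- the pointwise curvature identity
  have key : ∀ Z : VF, g (Rcurv D Z X Y) Z = g (Rcurv LC Z X Y) Z +
      (algebraMap ℝ C^(⊤ : ℕ∞)⟮I, M; ℝ⟯ α * (HessT LC u Z X * g Y Z)
      + algebraMap ℝ C^(⊤ : ℕ∞)⟮I, M; ℝ⟯ α * (HessT LC u Z Y * g X Z)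
      + algebraMap ℝ C^(⊤ : ℕ∞)⟮I, M; ℝ⟯ γ * (g X Y * HessT LC u Z Z)
      - algebraMap ℝ C^(⊤ : ℕ∞)⟮I, M; ℝ⟯ α * (HessT LC u X Z * g Y Z)
      - algebraMap ℝ C^(⊤ : ℕ∞)⟮I, M; ℝ⟯ α * (HessT LC u X Y * g Z Z)
      - algebraMap ℝ C^(⊤ : ℕ∞)⟮I, M; ℝ⟯ γ * (HessT LC u X Z * g Y Z)
      - algebraMap ℝ C^(⊤ : ℕ∞)⟮I, M; ℝ⟯ α * algebraMap ℝ C^(⊤ : ℕ∞)⟮I, M; ℝ⟯ α * (Y u * (Z u * g X Z))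
      + algebraMap ℝ C^(⊤ : ℕ∞)⟮I, M; ℝ⟯ γ * algebraMap ℝ C^(⊤ : ℕ∞)⟮I, M; ℝ⟯ γ * (g X Y * (Z u * Z u))
      + algebraMap ℝ C^(⊤ : ℕ∞)⟮I, M; ℝ⟯ α * algebraMap ℝ C^(⊤ : ℕ∞)⟮I, M; ℝ⟯ α * (X u * Y u * g Z Z)
      + algebraMap ℝ C^(⊤ : ℕ∞)⟮I, M; ℝ⟯ α * algebraMap ℝ C^(⊤ : ℕ∞)⟮I, M; ℝ⟯ γ * (gradu u * (g X Y * g Z Z))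
      - algebraMap ℝ C^(⊤ : ℕ∞)⟮I, M; ℝ⟯ γ * algebraMap ℝ C^(⊤ : ℕ∞)⟮I, M; ℝ⟯ γ * (X u * (Z u * g Y Z))
      - algebraMap ℝ C^(⊤ : ℕ∞)⟮I, M; ℝ⟯ α * algebraMap ℝ C^(⊤ : ℕ∞)⟮I, M; ℝ⟯ γ * (gradu u * (g Y Z * g X Z))) := by
    intro Z
    simp only [Rcurv, hD, htf]
    simp only [Algebra.smul_def]
    simp only [hsub1, hsub2, hadd1, hadd2, hsmul1, hLeib]
    simp only [hgsub1, hgsub2, hga, hga2, hgm, hgm2, hgradu, hgradu', hessg, hessg2,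
      Derivation.add_apply, Derivation.sub_apply, Derivation.smul_apply, smul_eq_mul,
      Derivation.leibniz, Derivation.map_algebraMap, map_add, map_sub, smul_zero, mul_zero,
      zero_mul, add_zero, zero_add, sub_zero, hcompat, hgradu, hgradu', hessg, hessg2]
    simp only [HessT]
    simp only [hgs]
    ring
  calc RicciT g e D X Y
      = ∑ i, (g (Rcurv LC (e i) X Y) (e i) +
      (algebraMap ℝ C^(⊤ : ℕ∞)⟮I, M; ℝ⟯ α * (HessT LC u (e i) X * g Y (e i))
      + algebraMap ℝ C^(⊤ : ℕ∞)⟮I, M; ℝ⟯ α * (HessT LC u (e i) Y * g X (e i))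
      + algebraMap ℝ C^(⊤ : ℕ∞)⟮I, M; ℝ⟯ γ * (g X Y * HessT LC u (e i) (e i))
      - algebraMap ℝ C^(⊤ : ℕ∞)⟮I, M; ℝ⟯ α * (HessT LC u X (e i) * g Y (e i))
      - algebraMap ℝ C^(⊤ : ℕ∞)⟮I, M; ℝ⟯ α * (HessT LC u X Y * g (e i) (e i))
      - algebraMap ℝ C^(⊤ : ℕ∞)⟮I, M; ℝ⟯ γ * (HessT LC u X (e i) * g Y (e i))
      - algebraMap ℝ C^(⊤ : ℕ∞)⟮I, M; ℝ⟯ α * algebraMap ℝ C^(⊤ : ℕ∞)⟮I, M; ℝ⟯ α * (Y u * ((e i) u * g X (e i)))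
      + algebraMap ℝ C^(⊤ : ℕ∞)⟮I, M; ℝ⟯ γ * algebraMap ℝ C^(⊤ : ℕ∞)⟮I, M; ℝ⟯ γ * (g X Y * ((e i) u * (e i) u))
      + algebraMap ℝ C^(⊤ : ℕ∞)⟮I, M; ℝ⟯ α * algebraMap ℝ C^(⊤ : ℕ∞)⟮I, M; ℝ⟯ α * (X u * Y u * g (e i) (e i))
      + algebraMap ℝ C^(⊤ : ℕ∞)⟮I, M; ℝ⟯ α * algebraMap ℝ C^(⊤ : ℕ∞)⟮I, M; ℝ⟯ γ * (gradu u * (g X Y * g (e i) (e i)))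
      - algebraMap ℝ C^(⊤ : ℕ∞)⟮I, M; ℝ⟯ γ * algebraMap ℝ C^(⊤ : ℕ∞)⟮I, M; ℝ⟯ γ * (X u * ((e i) u * g Y (e i)))
      - algebraMap ℝ C^(⊤ : ℕ∞)⟮I, M; ℝ⟯ α * algebraMap ℝ C^(⊤ : ℕ∞)⟮I, M; ℝ⟯ γ * (gradu u * (g Y (e i) * g X (e i))))) :=
        Finset.sum_congr rfl fun i _ => key (e i)
    _ = RicciT g e LC X Y
          - (((n : ℝ) - 1) * α + γ) • HessT LC u X Y
          + ((((n : ℝ) - 1) * α ^ 2 - γ ^ 2) • (X u * Y u))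
          + (γ • LapT LC e u
              + (γ * (((n : ℝ) - 1) * α + γ)) • g gradu gradu) * g X Y := by
        rw [Finset.sum_add_distrib]
        simp only [Finset.sum_add_distrib, Finset.sum_sub_distrib, ← Finset.mul_sum]
        rw [TA, TB, TLap, TC, T5, T7 X, T7 Y, T8, T9, hsymmH Y X]
        simp only [Algebra.smul_def, map_add, map_sub, map_mul, map_one, map_natCast, map_pow,
          hgradu gradu, RicciT]
        ring
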